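/- For an even positive integer m and n ≥ m+1, let S be the set of n-dimensional {1,−1,0}-vectors of weight m, and let Γ be the Cayley graph on the group of integer vectors with even coordinate sum with connection set S. Then Γ is edge-regular with parameters (k₂, λ₂) where k₂ = 2^m · C(n, m) and λ₂ = C(m, m/2) · C(n−m, m/2) · 2^{m/2}: every vertex has exactly k₂ neighbours and every pair of adjacent vertices has exactly λ₂ common neighbours. -/

import Mathlib

open Finset

/-- The set of `{1,−1,0}`-vectors in `ℤⁿ` of weight `m`. -/
def weightVectors (n m : ℕ) : Set (Fin n → ℤ) :=
  {x | (∀ i, x i = 1 ∨ x i = -1 ∨ x i = 0) ∧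
    (Finset.univ.filter fun i => x i ≠ 0).card = m}

/-- The group of integer vectors in `ℤⁿ` with even coordinate sum. -/
abbrev evenSum (n : ℕ) : Type := {x : Fin n → ℤ // Even (∑ i, x i)}

/-- The Cayley graph on the group of even-coordinate-sum integer vectors with
connection set the `{1,−1,0}`-vectors of weight `m`. -/
def cayEven (n m : ℕ) : SimpleGraph (evenSum n) :=
  SimpleGraph.fromRel (fun x y => (x : Fin n → ℤ) - (y : Fin n → ℤ) ∈ weightVectors n m)

namespace Stmt16Aux

variable {n m : ℕ}

def supp {n : ℕ} (x : Fin n → ℤ) : Finset (Fin n) := Finset.univ.filter fun i => x i ≠ 0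

lemma mem_supp {x : Fin n → ℤ} {i : Fin n} : i ∈ supp x ↔ x i ≠ 0 := by simp [supp]

lemma mem_wv {x : Fin n → ℤ} :
    x ∈ weightVectors n m ↔ (∀ i, x i = 1 ∨ x i = -1 ∨ x i = 0) ∧ (supp x).card = m := Iff.rfl

def signF {n : ℕ} (f : Fin n → ℤ) (B C : Finset (Fin n)) : Finset (Fin n → ℤ) :=
  Fintype.piFinset fun i => if i ∈ B then {f i} else if i ∈ C then ({1, -1} : Finset ℤ) else {0}

lemma mem_signF {f x : Fin n → ℤ} {B C : Finset (Fin n)} :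
    x ∈ signF f B C ↔ ∀ i, x i ∈
      (if i ∈ B then ({f i} : Finset ℤ) else if i ∈ C then {1, -1} else {0}) :=
  Fintype.mem_piFinset

lemma card_signF (f : Fin n → ℤ) {B C : Finset (Fin n)} (h : Disjoint B C) :
    (signF f B C).card = 2 ^ C.card := by
  rw [signF, Fintype.card_piFinset]
  have key : ∀ i : Fin n,
      (if i ∈ B then ({f i} : Finset ℤ) else if i ∈ C then {1, -1} else {0}).card
        = if i ∈ C then 2 else 1 := by
    intro i
    by_cases hB : i ∈ B
    · simp [hB, Finset.disjoint_left.mp h hB]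
    · by_cases hC : i ∈ C <;> simp [hB, hC]
  simp only [key]
  rw [Finset.prod_ite_mem, Finset.univ_inter, Finset.prod_const]

lemma supp_signF {f x : Fin n → ℤ} {B C : Finset (Fin n)} (hx : x ∈ signF f B C)
    (hf : ∀ i ∈ B, f i ≠ 0) : supp x = B ∪ C := by
  ext i
  have hi := mem_signF.mp hx i
  rw [mem_supp, Finset.mem_union]
  by_cases hB : i ∈ B
  · simp only [hB, if_pos] at hi
    simp only [Finset.mem_singleton] at hi
    simp [hB, hi, hf i hB]
  · by_cases hC : i ∈ C
    · simp only [if_neg hB, if_pos hC, Finset.mem_insert, Finset.mem_singleton] at hi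
      rcases hi with h1 | h1 <;> simp [hB, hC, h1]
    · simp only [if_neg hB, if_neg hC, Finset.mem_singleton] at hi
      simp [hB, hC, hi]

lemma entries_signF {f x : Fin n → ℤ} {B C : Finset (Fin n)} (hx : x ∈ signF f B C)
    (hf : ∀ i ∈ B, f i = 1 ∨ f i = -1) : ∀ i, x i = 1 ∨ x i = -1 ∨ x i = 0 := by
  intro i
  have hi := mem_signF.mp hx i
  by_cases hB : i ∈ B
  · simp only [if_pos hB, Finset.mem_singleton] at hi
    rcases hf i hB with h1 | h1 <;> simp [hi, h1]
  · by_cases hC : i ∈ C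
    · simp only [if_neg hB, if_pos hC, Finset.mem_insert, Finset.mem_singleton] at hi
      tauto
    · simp only [if_neg hB, if_neg hC, Finset.mem_singleton] at hi
      tauto

def Sfin (n m : ℕ) : Finset (Fin n → ℤ) :=
  (Finset.univ.powersetCard m).biUnion fun A => signF (fun _ => 0) ∅ A

lemma coe_Sfin : weightVectors n m = ↑(Sfin n m) := by
  ext x
  simp only [Sfin, Finset.coe_biUnion, Set.mem_iUnion, Finset.mem_coe, mem_wv,
    Finset.mem_powersetCard]
  constructor
  · rintro ⟨h1, h2⟩
    refine ⟨supp x, ⟨⟨Finset.subset_univ _, h2⟩, ?_⟩⟩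
    rw [mem_signF]
    intro i
    simp only [Finset.notMem_empty, if_false]
    by_cases hi : x i = 0
    · simp [mem_supp, hi]
    · have : i ∈ supp x := mem_supp.mpr hi
      simp only [this, if_pos, Finset.mem_insert, Finset.mem_singleton]
      rcases h1 i with h | h | h <;> tauto
  · rintro ⟨A, ⟨⟨-, hA⟩, hx⟩⟩
    refine ⟨entries_signF hx (by simp), ?_⟩
    rw [supp_signF hx (by simp), Finset.empty_union, hA]

lemma card_Sfin : (Sfin n m).card = 2 ^ m * n.choose m := by
  rw [Sfin, Finset.card_biUnion]
  · rw [Finset.sum_congr rfl (g := fun _ => 2 ^ m) (fun A hA => ?_), Finset.sum_const,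
      Finset.card_powersetCard, Finset.card_univ, Fintype.card_fin, smul_eq_mul, mul_comm]
    rw [card_signF _ (Finset.disjoint_left.mpr (by simp)),
      (Finset.mem_powersetCard.mp hA).2]
  · intro A hA A' hA' hne
    rw [Function.onFun, Finset.disjoint_left]
    intro x hx hx'
    apply hne
    have e1 := supp_signF hx (by simp)
    have e2 := supp_signF hx' (by simp)
    rw [Finset.empty_union] at e1 e2
    rw [← e1, ← e2]

def Tfin (n m : ℕ) (s : Fin n → ℤ) : Finset (Fin n → ℤ) :=
  (((supp s).powersetCard (m / 2)) ×ˢ ((Finset.univ \ supp s).powersetCard (m / 2))).biUnion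
    fun p => signF s p.1 p.2

lemma coe_Tfin (hm : Even m) {s : Fin n → ℤ} (hs : s ∈ weightVectors n m) :
    {t | t ∈ weightVectors n m ∧ t - s ∈ weightVectors n m} = ↑(Tfin n m s) := by
  obtain ⟨k, hk⟩ := hm
  ext t
  simp only [Tfin, Finset.coe_biUnion, Set.mem_iUnion, Finset.mem_coe, Set.mem_setOf_eq,
    Finset.mem_product, Finset.mem_powersetCard]
  constructor
  · rintro ⟨ht, hts⟩
    have key : ∀ i ∈ supp s, t i = 0 ∨ t i = s i := by
      intro i hi
      have h1 := ht.1 i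
      have h2 := hts.1 i
      have h3 := hs.1 i
      have h4 := mem_supp.mp hi
      simp only [Pi.sub_apply] at h2
      rcases h3 with h3 | h3 | h3 <;> rcases h1 with h1 | h1 | h1 <;> omega
    set B := supp t ∩ supp s with hB
    set C := supp t \ supp s with hC
    have hsupp : supp t = B ∪ C := by
      rw [hB, hC]
      ext i
      simp only [Finset.mem_union, Finset.mem_inter, Finset.mem_sdiff]
      tauto
    have hcard1 : B.card + C.card = m := by
      rw [hB, hC, Finset.card_inter_add_card_sdiff]; exact ht.2
    have hsupp2 : supp (t - s) = (supp s \ B) ∪ C := by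
      ext i
      by_cases hi : i ∈ supp s
      · have hsi := mem_supp.mp hi
        simp only [mem_supp, Pi.sub_apply, Finset.mem_union, Finset.mem_sdiff, hB, hC,
          Finset.mem_inter, mem_supp, hi]
        rcases key i hi with h | h <;> simp [h, hsi]
      · have hsi : s i = 0 := by_contra fun h => hi (mem_supp.mpr h)
        simp only [mem_supp, Pi.sub_apply, Finset.mem_union, Finset.mem_sdiff, hB, hC,
          Finset.mem_inter, mem_supp, hi, hsi]
        simp [hsi]
    have hBs : B ⊆ supp s := Finset.inter_subset_right
    have hcard2 : (supp s).card - B.card + C.card = m := by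
      have := hts.2
      rw [show (Finset.univ.filter fun i => (t - s) i ≠ 0) = supp (t - s) from rfl,
        hsupp2, Finset.card_union_of_disjoint, Finset.card_sdiff_of_subset hBs] at this
      · exact this
      · rw [Finset.disjoint_left]
        intro a ha ha'
        exact (Finset.mem_sdiff.mp ha').2 (Finset.mem_sdiff.mp ha).1
    have hBcard : B.card = m / 2 := by
      have hle : B.card ≤ (supp s).card := Finset.card_le_card hBs
      have hsc : (supp s).card = m := hs.2
      omega
    have hCcard : C.card = m / 2 := by omega
    refine ⟨⟨B, C⟩, ⟨⟨hBs, hBcard⟩, ⟨fun a ha => Finset.mem_sdiff.mpr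
      ⟨Finset.mem_univ a, (Finset.mem_sdiff.mp ha).2⟩, hCcard⟩⟩, ?_⟩
    rw [mem_signF]
    intro i
    by_cases hiB : i ∈ B
    · have hiA : i ∈ supp s := hBs hiB
      have hit : t i ≠ 0 := mem_supp.mp (Finset.mem_inter.mp hiB).1
      rcases key i hiA with h | h
      · exact absurd h hit
      · simp [hiB, h]
    · by_cases hiC : i ∈ C
      · have hit : t i ≠ 0 := mem_supp.mp (Finset.mem_sdiff.mp hiC).1
        simp only [if_neg hiB, if_pos hiC, Finset.mem_insert, Finset.mem_singleton]
        rcases ht.1 i with h | h | h <;> tauto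
      · have : i ∉ supp t := by rw [hsupp]; simp [hiB, hiC]
        have hit : t i = 0 := by_contra fun h => this (mem_supp.mpr h)
        simp [hiB, hiC, hit]
  · rintro ⟨⟨B, C⟩, ⟨⟨hBs, hBcard⟩, ⟨hCs, hCcard⟩⟩, hx⟩
    have hCA : ∀ i ∈ C, s i = 0 := by
      intro i hi
      have := (Finset.mem_sdiff.mp (hCs hi)).2
      exact by_contra fun h => this (mem_supp.mpr h)
    have hdisj : Disjoint B C := by
      rw [Finset.disjoint_left]
      intro a ha ha'
      exact (Finset.mem_sdiff.mp (hCs ha')).2 (hBs ha)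
    have hmem := fun i => mem_signF.mp hx i
    have hvB : ∀ i ∈ B, t i = s i := by
      intro i hi; have := hmem i; simpa [hi] using this
    have hvC : ∀ i ∈ C, t i = 1 ∨ t i = -1 := by
      intro i hi
      have := hmem i
      simp only [if_neg (Finset.disjoint_right.mp hdisj hi), if_pos hi, Finset.mem_insert,
        Finset.mem_singleton] at this
      exact this
    have hv0 : ∀ i, i ∉ B → i ∉ C → t i = 0 := by
      intro i hi1 hi2; have := hmem i; simpa [hi1, hi2] using this
    have hsB : ∀ i ∈ B, s i = 1 ∨ s i = -1 := by
      intro i hi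
      have h4 := mem_supp.mp (hBs hi)
      rcases hs.1 i with h | h | h <;> tauto
    have hsuppt : supp t = B ∪ C := by
      ext i
      rw [mem_supp, Finset.mem_union]
      by_cases h1 : i ∈ B
      · have := hvB i h1
        have h4 := mem_supp.mp (hBs h1)
        simp [h1, this, h4]
      · by_cases h2 : i ∈ C
        · rcases hvC i h2 with h | h <;> simp [h1, h2, h]
        · simp [h1, h2, hv0 i h1 h2]
    constructor
    · refine ⟨?_, ?_⟩
      · intro i
        by_cases h1 : i ∈ B
        · rcases hsB i h1 with h | h <;> rw [hvB i h1, h] <;> tauto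
        · by_cases h2 : i ∈ C
          · rcases hvC i h2 with h | h <;> tauto
          · exact Or.inr (Or.inr (hv0 i h1 h2))
      · rw [show (Finset.univ.filter fun i => t i ≠ 0) = supp t from rfl, hsuppt,
          Finset.card_union_of_disjoint hdisj, hBcard, hCcard]
        omega
    · refine ⟨?_, ?_⟩
      · intro i
        simp only [Pi.sub_apply]
        by_cases h1 : i ∈ B
        · rw [hvB i h1]; simp
        · by_cases h2 : i ∈ C
          · rw [hCA i h2, sub_zero]
            rcases hvC i h2 with h | h <;> tauto
          · rw [hv0 i h1 h2, zero_sub]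
            rcases hs.1 i with h | h | h <;> rw [h] <;> norm_num
      · show (Finset.univ.filter fun i => (t - s) i ≠ 0).card = m
        have hset : (Finset.univ.filter fun i => (t - s) i ≠ 0) = (supp s \ B) ∪ C := by
          ext i
          simp only [Finset.mem_filter, Finset.mem_univ, true_and, Pi.sub_apply,
            Finset.mem_union, Finset.mem_sdiff]
          by_cases h1 : i ∈ B
          · have hv := hvB i h1
            have hdC := Finset.disjoint_left.mp hdisj h1
            simp [h1, hv, hdC]
          · by_cases h2 : i ∈ C
            · have hv := hCA i h2
              rcases hvC i h2 with h | h <;> simp [h, hv, h2]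
            · have hv := hv0 i h1 h2
              simp [hv, h1, h2, mem_supp, sub_ne_zero]
        rw [hset, Finset.card_union_of_disjoint, Finset.card_sdiff_of_subset hBs, hBcard, hCcard]
        · have hsc : (supp s).card = m := hs.2
          omega
        · rw [Finset.disjoint_left]
          intro a ha ha'
          exact (Finset.mem_sdiff.mp (hCs ha')).2 (Finset.mem_sdiff.mp ha).1

lemma pair_determined {s x : Fin n → ℤ} {B C : Finset (Fin n)} (hB : B ⊆ supp s)
    (hC : C ⊆ Finset.univ \ supp s) (hx : x ∈ signF s B C) :
    B = supp x ∩ supp s ∧ C = supp x \ supp s := by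
  have h1 : supp x = B ∪ C := supp_signF hx (fun i hi => mem_supp.mp (hB hi))
  rw [h1]
  have f1 : ∀ i, i ∈ B → i ∈ supp s := fun i hi => hB hi
  have f2 : ∀ i, i ∈ C → i ∉ supp s := fun i hi => (Finset.mem_sdiff.mp (hC hi)).2
  constructor <;> ext i <;>
    simp only [Finset.mem_inter, Finset.mem_union, Finset.mem_sdiff] <;>
    have := f1 i <;> have := f2 i <;> tauto

lemma card_Tfin {s : Fin n → ℤ} (hs : s ∈ weightVectors n m) :
    (Tfin n m s).card = m.choose (m / 2) * (n - m).choose (m / 2) * 2 ^ (m / 2) := by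
  rw [Tfin, Finset.card_biUnion]
  · rw [Finset.sum_congr rfl (g := fun _ => 2 ^ (m / 2)) ?_, Finset.sum_const, smul_eq_mul,
      Finset.card_product, Finset.card_powersetCard, Finset.card_powersetCard,
      Finset.card_sdiff_of_subset (Finset.subset_univ _), Finset.card_univ, Fintype.card_fin]
    · have hsc : (supp s).card = m := hs.2
      rw [hsc]
    · rintro ⟨B, C⟩ hp
      rw [Finset.mem_product, Finset.mem_powersetCard, Finset.mem_powersetCard] at hp
      have hdisj : Disjoint B C := Finset.disjoint_left.mpr fun a ha ha' =>
        (Finset.mem_sdiff.mp (hp.2.1 ha')).2 (hp.1.1 ha)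
      rw [card_signF s hdisj, hp.2.2]
  · rintro ⟨B, C⟩ hp ⟨B', C'⟩ hp' hne
    rw [Finset.mem_coe, Finset.mem_product, Finset.mem_powersetCard, Finset.mem_powersetCard] at hp hp'
    rw [Function.onFun, Finset.disjoint_left]
    intro x hx hx'
    obtain ⟨e1, e2⟩ := pair_determined hp.1.1 hp.2.1 hx
    obtain ⟨e1', e2'⟩ := pair_determined hp'.1.1 hp'.2.1 hx'
    exact hne (by rw [Prod.mk.injEq]; exact ⟨e1.trans e1'.symm, e2.trans e2'.symm⟩)

lemma neg_mem {t : Fin n → ℤ} (ht : t ∈ weightVectors n m) : -t ∈ weightVectors n m := by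
  constructor
  · intro i; rcases ht.1 i with h | h | h <;> simp [h]
  · rw [← ht.2]
    congr 1
    ext i
    simp

lemma even_sum_of_mem (hm : Even m) {t : Fin n → ℤ} (ht : t ∈ weightVectors n m) :
    Even (∑ i, t i) := by
  have h2 : (2:ℤ) ∣ ∑ i, (t i - if t i ≠ 0 then 1 else 0) := by
    refine Finset.dvd_sum fun i _ => ?_
    rcases ht.1 i with h | h | h <;> simp [h]
  rw [Finset.sum_sub_distrib, Finset.sum_boole, ht.2] at h2
  have h3 : Even (∑ i, t i - (m : ℤ)) := even_iff_two_dvd.mpr h2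
  have h4 : Even ((m : ℤ)) := by exact_mod_cast hm
  have := h3.add h4
  simpa using this

lemma adj_iff (hm0 : 0 < m) {x y : evenSum n} :
    (cayEven n m).Adj x y ↔ (x : Fin n → ℤ) - (y : Fin n → ℤ) ∈ weightVectors n m := by
  rw [cayEven, SimpleGraph.fromRel_adj]
  constructor
  · rintro ⟨hne, h | h⟩
    · exact h
    · have := neg_mem h
      rwa [neg_sub] at this
  · intro h
    refine ⟨?_, Or.inl h⟩
    rintro rfl
    have h2 := h.2
    simp at h2
    omega

lemma even_sub_of_mem (hm : Even m) (x : evenSum n) {t : Fin n → ℤ}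
    (ht : t ∈ weightVectors n m) : Even (∑ i, ((x : Fin n → ℤ) - t) i) := by
  simp only [Pi.sub_apply]
  rw [Finset.sum_sub_distrib]
  exact x.2.sub (even_sum_of_mem hm ht)

lemma sub_inj (x : evenSum n) : Function.Injective
    (fun y : evenSum n => (x : Fin n → ℤ) - (y : Fin n → ℤ)) := by
  intro a b hab
  exact Subtype.ext (by simpa using sub_right_injective hab)

end Stmt16Aux

open Stmt16Aux in
theorem stmt16 (n m : ℕ) (hm : Even m) (hm0 : 0 < m) (hn : m + 1 ≤ n) :
    (∀ x : evenSum n, ((cayEven n m).neighborSet x).ncard = 2 ^ m * n.choose m) ∧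
    (∀ x y : evenSum n, (cayEven n m).Adj x y →
      ((cayEven n m).commonNeighbors x y).ncard =
        m.choose (m / 2) * (n - m).choose (m / 2) * 2 ^ (m / 2)) := by
  constructor
  · intro x
    have himg : (fun y : evenSum n => (x : Fin n → ℤ) - (y : Fin n → ℤ)) ''
        (cayEven n m).neighborSet x = weightVectors n m := by
      ext t
      simp only [Set.mem_image, SimpleGraph.mem_neighborSet]
      constructor
      · rintro ⟨y, hy, rfl⟩
        exact (adj_iff hm0).mp hy
      · intro ht
        refine ⟨⟨(x : Fin n → ℤ) - t, even_sub_of_mem hm x ht⟩, ?_, ?_⟩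
        · exact (adj_iff hm0).mpr (by simpa using ht)
        · simp
    have := Set.ncard_image_of_injective ((cayEven n m).neighborSet x) (sub_inj x)
    rw [himg] at this
    rw [← this, coe_Sfin, Set.ncard_coe_finset, card_Sfin]
  · intro x y hadj
    have hs : (x : Fin n → ℤ) - (y : Fin n → ℤ) ∈ weightVectors n m := (adj_iff hm0).mp hadj
    have himg : (fun z : evenSum n => (x : Fin n → ℤ) - (z : Fin n → ℤ)) ''
        (cayEven n m).commonNeighbors x y
        = {t | t ∈ weightVectors n m ∧
            t - ((x : Fin n → ℤ) - (y : Fin n → ℤ)) ∈ weightVectors n m} := by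
      ext t
      simp only [Set.mem_image, SimpleGraph.mem_commonNeighbors, Set.mem_setOf_eq]
      constructor
      · rintro ⟨z, ⟨h1, h2⟩, rfl⟩
        refine ⟨(adj_iff hm0).mp h1, ?_⟩
        have := (adj_iff hm0).mp h2
        have heq : (y : Fin n → ℤ) - (z : Fin n → ℤ)
            = ((x : Fin n → ℤ) - (z : Fin n → ℤ)) - ((x : Fin n → ℤ) - (y : Fin n → ℤ)) := by
          ring
        rwa [heq] at this
      · rintro ⟨h1, h2⟩
        refine ⟨⟨(x : Fin n → ℤ) - t, even_sub_of_mem hm x h1⟩, ⟨?_, ?_⟩, ?_⟩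
        · exact (adj_iff hm0).mpr (by simpa using h1)
        · refine (adj_iff hm0).mpr ?_
          have heq : (y : Fin n → ℤ) - ((x : Fin n → ℤ) - t)
              = t - ((x : Fin n → ℤ) - (y : Fin n → ℤ)) := by ring
          rw [heq]
          exact h2
        · simp
    have := Set.ncard_image_of_injective ((cayEven n m).commonNeighbors x y) (sub_inj x)
    rw [himg] at this
    rw [← this, coe_Tfin hm hs, Set.ncard_coe_finset, card_Tfin hs]
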